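/- Let ≤_{T'} ⊆ ≤_T be preorders on a set X such that the identity-on-objects map T' → T is admissible. Then for every x ∈ X, the map [y]_{∼_{T'}} ↦ [y]_{∼_T} is a well-defined isomorphism of posets from the sub-poset {[y] | y ∼_{T'/T'} x} of the posetification of T' onto the sub-poset {[y] | y ∼_{T/T'} x} of the posetification of T (i.e., the fibre of posetification(T) → posetification(T/T') over the class of x equals the corresponding fibre of posetification(T') → posetification(T'/T')). -/

import Mathlib

section Defs

variable {α β : Type*}

/-- `f` is monotone from the relation `r` to the relation `s`. -/
def Mono (r : α → α → Prop) (s : β → β → Prop) (f : α → β) : Prop :=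
  ∀ a b, r a b → s (f a) (f b)

/-- A monotone map `f` is convex if whenever `f x ≤ w ≤ f y` there is a unique
`p` with `x ≤ p ≤ y` and `f p = w`. -/
def ConvexMap (r : α → α → Prop) (s : β → β → Prop) (f : α → β) : Prop :=
  Mono r s f ∧ ∀ x y w, s (f x) w → s w (f y) → ∃! p, r x p ∧ r p y ∧ f p = w

/-- A subset `S` is connected (w.r.t. the order relation `r`) if any two of its
elements are joined by a finite zigzag of comparable pairs lying in `S`. -/
def ConnectedIn (r : α → α → Prop) (S : Set α) : Prop :=
  ∀ x ∈ S, ∀ y ∈ S,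
    Relation.ReflTransGen (fun a b => a ∈ S ∧ b ∈ S ∧ (r a b ∨ r b a)) x y

/-- A subset `S` is order-convex w.r.t. `r`. -/
def OrdConvexIn (r : α → α → Prop) (S : Set α) : Prop :=
  ∀ x ∈ S, ∀ y ∈ S, ∀ z, r x z → r z y → z ∈ S

/-- The strict relation associated to `r`. -/
def LtRel (r : α → α → Prop) (a b : α) : Prop := r a b ∧ ¬ r b a

/-- `b` covers `a` w.r.t. `r`. -/
def CovRel (r : α → α → Prop) (a b : α) : Prop :=
  LtRel r a b ∧ ∀ c, ¬ (LtRel r a c ∧ LtRel r c b)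

/-- A contraction: a monotone surjection with connected convex fibres that lifts covers. -/
def IsContraction (r : α → α → Prop) (s : β → β → Prop) (f : α → β) : Prop :=
  Mono r s f ∧ Function.Surjective f ∧
  (∀ q, ConnectedIn r (f ⁻¹' {q}) ∧ OrdConvexIn r (f ⁻¹' {q})) ∧
  ∀ q q', CovRel s q q' → ∃ p p', CovRel r p p' ∧ f p = q ∧ f p' = q'

/-- A collapse map: a monotone surjection which partially reflects the strict order. -/
def IsCollapse (r : α → α → Prop) (s : β → β → Prop) (f : α → β) : Prop :=
  Mono r s f ∧ Function.Surjective f ∧ ∀ x y, LtRel s (f x) (f y) → LtRel r x y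

/-- `r` is a partial order relation. -/
def IsPartialOrderRel (r : α → α → Prop) : Prop :=
  (∀ a, r a a) ∧ (∀ a b c, r a b → r b c → r a c) ∧ (∀ a b, r a b → r b a → a = b)

/-- `r` is a preorder relation. -/
def IsPreorderRel (r : α → α → Prop) : Prop :=
  (∀ a, r a a) ∧ ∀ a b c, r a b → r b c → r a c

/-- The symmetrization `x ∼ y` of a preorder relation. -/
def Sim (r : α → α → Prop) (x y : α) : Prop := r x y ∧ r y x

/-- The quotient preorder `T/T'`: the transitive closure of
`x R y ⟺ (x ≤_T y or y ≤_{T'} x)`. -/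
def QuotRel (r r' : α → α → Prop) : α → α → Prop :=
  Relation.TransGen (fun x y => r x y ∨ r' y x)

/-- The identity-on-objects monotone map of preorders `T' → T` is admissible. -/
def Admissible (r' r : α → α → Prop) : Prop :=
  (∀ x y, r' x y → r x y) ∧
  (∀ Y : Set α, ConnectedIn r' Y → ∀ x ∈ Y, ∀ y ∈ Y, (r x y ↔ r' x y)) ∧
  (∀ x y, Sim (QuotRel r r') x y ↔ Sim (QuotRel r' r') x y)

/-- The identity-on-objects monotone map of preorders `T → V` is a contraction of preorders. -/
def PreContraction (r v : α → α → Prop) : Prop :=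
  (∀ x y, r x y → v x y) ∧
  (∀ x, ConnectedIn r {y | Sim v x y}) ∧
  ∀ a a', CovRel v a a' → ∃ t t', CovRel r t t' ∧ t = a ∧ t' = a'

/-- The setoid on `α` whose relation is the symmetrization of the preorder relation `r`. -/
def simSetoid (r : α → α → Prop) (h : IsPreorderRel r) : Setoid α where
  r := Sim r
  iseqv := ⟨fun x => ⟨h.1 x, h.1 x⟩, fun hxy => ⟨hxy.2, hxy.1⟩,
    fun h1 h2 => ⟨h.2 _ _ _ h1.1 h2.1, h.2 _ _ _ h2.2 h1.2⟩⟩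

/-- The partial order relation on the posetification (antisymmetrization) of a preorder. -/
def posetLe (r : α → α → Prop) (h : IsPreorderRel r) :
    Quotient (simSetoid r h) → Quotient (simSetoid r h) → Prop :=
  Quotient.lift₂ r (fun _ _ _ _ hx hy => propext
    ⟨fun hr => h.2 _ _ _ (h.2 _ _ _ hx.2 hr) hy.1,
     fun hr => h.2 _ _ _ (h.2 _ _ _ hx.1 hr) hy.2⟩)

/-- A tree: a poset with a greatest element in which every interval is linearly ordered. -/
def IsTreeRel (r : α → α → Prop) : Prop :=
  (∃ t, ∀ p, r p t) ∧
  ∀ p p' z w, r p z → r z p' → r p w → r w p' → (r z w ∨ r w z)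

/-- The connected component of `p` w.r.t. the order relation `r`. -/
def component (r : α → α → Prop) (p : α) : Set α :=
  {q | Relation.ReflTransGen (fun a b => r a b ∨ r b a) p q}

/-- A forest: a poset each of whose connected components is a tree. -/
def IsForestRel (r : α → α → Prop) : Prop :=
  ∀ p, IsTreeRel (fun a b : component r p => r a.1 b.1)

end Defs

/-- for an admissible map `T' → T` and `x ∈ X`, the map
`[y]_{T'} ↦ [y]_T` is a well-defined isomorphism of posets from the fibre
`{[y] | y ∼_{T'/T'} x}` of the posetification of `T'` onto the fibre
`{[y] | y ∼_{T/T'} x}` of the posetification of `T`. -/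
theorem admissible_fibre_posetification_iso {X : Type*} (rT' rT : X → X → Prop)
    (hT' : IsPreorderRel rT') (hT : IsPreorderRel rT)
    (hsub : ∀ x y, rT' x y → rT x y)
    (hadm : Admissible rT' rT) (x : X) :
    ∃ e : {a : Quotient (simSetoid rT' hT') //
            ∃ y, Quotient.mk (simSetoid rT' hT') y = a ∧ Sim (QuotRel rT' rT') y x} ≃
          {a : Quotient (simSetoid rT hT) //
            ∃ y, Quotient.mk (simSetoid rT hT) y = a ∧ Sim (QuotRel rT rT') y x},
      (∀ (y : X) (hy : Sim (QuotRel rT' rT') y x),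
        (e ⟨Quotient.mk (simSetoid rT' hT') y, y, rfl, hy⟩).1 =
          Quotient.mk (simSetoid rT hT) y) ∧
      ∀ a b, posetLe rT' hT' a.1 b.1 ↔ posetLe rT hT (e a).1 (e b).1 := by

  obtain ⟨hsub', hconn, hquot⟩ := hadm
  set S : Set X := {y | Sim (QuotRel rT' rT') y x} with hS
  -- symmetry of the quotient relation T'/T'
  have qsym : ∀ a b, QuotRel rT' rT' a b → QuotRel rT' rT' b a := by
    intro a b h
    induction h with
    | single h => exact Relation.TransGen.single h.symm
    | tail _ hbc ih => exact Relation.TransGen.head hbc.symm ih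
  have memS : ∀ y, QuotRel rT' rT' y x → y ∈ S := fun y h => ⟨h, qsym _ _ h⟩
  have xS : x ∈ S := memS x (Relation.TransGen.single (Or.inl (hT'.1 x)))
  -- every element of S is connected to x within S
  have chain : ∀ y, QuotRel rT' rT' y x →
      Relation.ReflTransGen (fun a b => a ∈ S ∧ b ∈ S ∧ (rT' a b ∨ rT' b a)) y x := by
    intro y h
    induction h using Relation.TransGen.head_induction_on with
    | single h =>
      exact Relation.ReflTransGen.single ⟨memS _ (Relation.TransGen.single h), xS, h⟩
    | head h' htr ih =>
      exact Relation.ReflTransGen.head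
        ⟨memS _ (Relation.TransGen.head h' htr), memS _ htr, h'⟩ ih
  have rev : ∀ {a b : X},
      Relation.ReflTransGen (fun a b => a ∈ S ∧ b ∈ S ∧ (rT' a b ∨ rT' b a)) a b →
      Relation.ReflTransGen (fun a b => a ∈ S ∧ b ∈ S ∧ (rT' a b ∨ rT' b a)) b a := by
    intro a b h
    induction h with
    | refl => exact Relation.ReflTransGen.refl
    | tail _ hbc ih => exact Relation.ReflTransGen.head ⟨hbc.2.1, hbc.1, hbc.2.2.symm⟩ ih
  have conn : ConnectedIn rT' S := by
    intro y hy z hz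
    exact (chain y hy.1).trans (rev (chain z hz.1))
  have rEq : ∀ y ∈ S, ∀ z ∈ S, (rT y z ↔ rT' y z) := hconn S conn
  -- the map on quotients
  have Fok : ∀ y z : X, Sim rT' y z →
      Quotient.mk (simSetoid rT hT) y = Quotient.mk (simSetoid rT hT) z :=
    fun y z h => Quotient.sound ⟨hsub _ _ h.1, hsub _ _ h.2⟩
  let F : Quotient (simSetoid rT' hT') → Quotient (simSetoid rT hT) :=
    Quotient.lift (fun y => Quotient.mk (simSetoid rT hT) y) Fok
  let f : {a : Quotient (simSetoid rT' hT') //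
            ∃ y, Quotient.mk (simSetoid rT' hT') y = a ∧ Sim (QuotRel rT' rT') y x} →
          {a : Quotient (simSetoid rT hT) //
            ∃ y, Quotient.mk (simSetoid rT hT) y = a ∧ Sim (QuotRel rT rT') y x} :=
    fun a => ⟨F a.1, by
      obtain ⟨y, hy1, hy2⟩ := a.2
      exact ⟨y, by rw [← hy1]; rfl, (hquot y x).2 hy2⟩⟩
  have hinj : Function.Injective f := by
    intro a b hfe
    obtain ⟨y, hy1, hy2⟩ := a.2
    obtain ⟨z, hz1, hz2⟩ := b.2
    have h1 : F a.1 = F b.1 := congrArg Subtype.val hfe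
    rw [← hy1, ← hz1] at h1
    have hsim : Sim rT y z := Quotient.exact h1
    apply Subtype.ext
    rw [← hy1, ← hz1]
    exact Quotient.sound ⟨(rEq y hy2 z hz2).1 hsim.1, (rEq z hz2 y hy2).1 hsim.2⟩
  have hsurj : Function.Surjective f := by
    intro b
    obtain ⟨z, hz1, hz2⟩ := b.2
    refine ⟨⟨Quotient.mk (simSetoid rT' hT') z, z, rfl, (hquot z x).1 hz2⟩, ?_⟩
    apply Subtype.ext
    show F (Quotient.mk (simSetoid rT' hT') z) = b.1
    rw [← hz1]; rfl
  refine ⟨Equiv.ofBijective f ⟨hinj, hsurj⟩, fun y hy => rfl, fun a b => ?_⟩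
  obtain ⟨y, hy1, hy2⟩ := a.2
  obtain ⟨z, hz1, hz2⟩ := b.2
  have ea : ((Equiv.ofBijective f ⟨hinj, hsurj⟩) a).1 = Quotient.mk (simSetoid rT hT) y := by
    show F a.1 = _
    rw [← hy1]; rfl
  have eb : ((Equiv.ofBijective f ⟨hinj, hsurj⟩) b).1 = Quotient.mk (simSetoid rT hT) z := by
    show F b.1 = _
    rw [← hz1]; rfl
  rw [ea, eb, ← hy1, ← hz1]
  exact (rEq y hy2 z hz2).symm
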